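/- Let (A(n))_{n∈ℕ} be a sequence of invertible d×d real matrices, let e ∈ ℝ^d have all coordinates positive and w ∈ ℝ^d be nonzero, such that the normalized products (A(n) ⋯ A(1) A(0)) / ‖A(n) ⋯ A(1) A(0)‖ converge to the rank-one matrix e wᵀ as n → ∞ (Frobenius norm). Let U_0 ∈ ℝ^d satisfy wᵀ U_0 > 0, define U_{n+1} = A(n) U_n, and let T be an invertible d×d real matrix such that v := T e has all coordinates positive. Then there exists N such that for all n ≥ N the vector T U_n has all coordinates positive, and d_H(T U_n, v) → 0 as n → ∞. -/

import Mathlib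

open Matrix Filter

/-- The product `A(n) A(n−1) ⋯ A(1) A(0)` of the first terms of a sequence of
matrices. -/
def prodSeq {d : ℕ} (A : ℕ → Matrix (Fin d) (Fin d) ℝ) : ℕ → Matrix (Fin d) (Fin d) ℝ
  | 0 => A 0
  | n + 1 => A (n + 1) * prodSeq A n

/-- The Frobenius norm of a real matrix. -/
noncomputable def frobNorm {d : ℕ} (M : Matrix (Fin d) (Fin d) ℝ) : ℝ :=
  Real.sqrt (∑ i, ∑ j, (M i j) ^ 2)

/-- Hilbert's pseudo-metric on the positive orthant of `ℝ^d`: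
`d_H(x, y) = log( max_i (x_i / y_i) / min_i (x_i / y_i) )`. -/
noncomputable def hilbertDist {d : ℕ} (x y : Fin d → ℝ) : ℝ :=
  Real.log ((⨆ i, x i / y i) / (⨅ i, x i / y i))

lemma frobNorm_pos {d : ℕ} {M : Matrix (Fin d) (Fin d) ℝ} (h : M ≠ 0) :
    0 < frobNorm M := by
  apply Real.sqrt_pos.mpr
  by_contra hle
  push_neg at hle
  have hsum : ∀ i ∈ Finset.univ, ∑ j, (M i j) ^ 2 = 0 := by
    intro i _
    have h1 : (0:ℝ) ≤ ∑ j, (M i j) ^ 2 := Finset.sum_nonneg fun j _ => sq_nonneg _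
    have h2 : ∑ i, ∑ j, (M i j) ^ 2 ≤ 0 := hle
    have := Finset.sum_nonneg (fun i (_ : i ∈ Finset.univ) =>
      Finset.sum_nonneg fun j (_ : j ∈ Finset.univ) => sq_nonneg (M i j))
    have hz : ∑ i, ∑ j, (M i j) ^ 2 = 0 := le_antisymm h2 this
    have := (Finset.sum_eq_zero_iff_of_nonneg (fun i _ =>
      Finset.sum_nonneg fun j _ => sq_nonneg (M i j))).mp hz
    exact this i (Finset.mem_univ i)
  apply h
  ext i j
  have := (Finset.sum_eq_zero_iff_of_nonneg (fun j _ => sq_nonneg (M i j))).mp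
    (hsum i (Finset.mem_univ i)) j (Finset.mem_univ j)
  simpa [pow_eq_zero_iff] using this

/-- If the normalized products of invertible matrices `A(n)` converge to
`e wᵀ` with `e > 0`, `w ≠ 0`, and `U_0` is generic (`wᵀ U_0 > 0`), then for any
invertible `T` such that `v = T e > 0`, the vectors `T U_n` are eventually
positive and `d_H(T U_n, v) → 0`. -/
theorem generic_hilbertDist_tendsto_zero {d : ℕ} (hd : 1 ≤ d)
    (A : ℕ → Matrix (Fin d) (Fin d) ℝ) (hinv : ∀ n, IsUnit (A n))
    (e w : Fin d → ℝ) (he : ∀ i, 0 < e i) (hw : w ≠ 0)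
    (hconv : ∀ i j, Tendsto (fun n => prodSeq A n i j / frobNorm (prodSeq A n))
      atTop (nhds (e i * w j)))
    (U : ℕ → Fin d → ℝ) (hU0 : 0 < ∑ i, w i * U 0 i)
    (hU : ∀ n, U (n + 1) = (A n).mulVec (U n))
    (T : Matrix (Fin d) (Fin d) ℝ) (hT : IsUnit T)
    (hv : ∀ i, 0 < T.mulVec e i) :
    (∃ N : ℕ, ∀ n ≥ N, ∀ i, 0 < T.mulVec (U n) i) ∧
    Tendsto (fun n => hilbertDist (T.mulVec (U n)) (T.mulVec e)) atTop (nhds 0) := by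
  haveI : NeZero d := ⟨by omega⟩
  set c : ℝ := ∑ i, w i * U 0 i with hc
  set v : Fin d → ℝ := T.mulVec e with hvdef
  -- products are invertible, hence nonzero, hence have positive Frobenius norm
  have hPinv : ∀ n, IsUnit (prodSeq A n) := by
    intro n
    induction n with
    | zero => exact hinv 0
    | succ n ih => exact (hinv (n + 1)).mul ih
  have hrpos : ∀ n, 0 < frobNorm (prodSeq A n) := by
    intro n
    apply frobNorm_pos
    intro h0
    have := (hPinv n).ne_zero
    simp_all
  -- U (n+1) in terms of the products
  have hUn : ∀ n, U (n + 1) = (prodSeq A n).mulVec (U 0) := by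
    intro n
    induction n with
    | zero => simpa [prodSeq] using hU 0
    | succ n ih =>
      rw [hU (n + 1), ih, prodSeq, ← mulVec_mulVec]
  -- the normalized vectors
  set f : ℕ → Fin d → ℝ :=
    fun n i => T.mulVec (U (n + 1)) i / frobNorm (prodSeq A n) with hfdef
  have hfformula : ∀ n i,
      f n i = ∑ j, ∑ k, T i j * (prodSeq A n j k / frobNorm (prodSeq A n)) * U 0 k := by
    intro n i
    simp only [hfdef, hUn, mulVec, dotProduct]
    rw [Finset.sum_div]
    refine Finset.sum_congr rfl fun j _ => ?_
    rw [Finset.mul_sum, Finset.sum_div]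
    refine Finset.sum_congr rfl fun k _ => ?_
    field_simp
  have hflim : ∀ i, Tendsto (fun n => f n i) atTop (nhds (c * v i)) := by
    intro i
    have hval : c * v i = ∑ j, ∑ k, T i j * (e j * w k) * U 0 k := by
      simp only [hc, hvdef, mulVec, dotProduct]
      rw [Finset.sum_mul, Finset.sum_comm]
      refine Finset.sum_congr rfl fun j _ => ?_
      rw [Finset.mul_sum]
      refine Finset.sum_congr rfl fun k _ => ?_
      ring
    rw [hval]
    simp only [hfformula]
    refine tendsto_finset_sum _ fun j _ => tendsto_finset_sum _ fun k _ => ?_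
    exact (((hconv j k).const_mul (T i j)).mul_const (U 0 k))
  -- eventually all coordinates of f are positive
  have hcv : ∀ i, 0 < c * v i := fun i => mul_pos hU0 (hv i)
  have hevt : ∀ᶠ n in atTop, ∀ i, 0 < f n i := by
    rw [eventually_all]
    intro i
    exact (hflim i).eventually (eventually_gt_nhds (hcv i))
  obtain ⟨N, hN⟩ := eventually_atTop.mp hevt
  have hTUpos : ∀ n ≥ N, ∀ i, 0 < T.mulVec (U (n + 1)) i := by
    intro n hn i
    have hfpos := hN n hn i
    have : T.mulVec (U (n + 1)) i = f n i * frobNorm (prodSeq A n) := by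
      simp only [hfdef]
      rw [div_mul_cancel₀ _ (hrpos n).ne']
    rw [this]
    exact mul_pos hfpos (hrpos n)
  constructor
  · exact ⟨N + 1, fun n hn i => by
      obtain ⟨m, rfl⟩ : ∃ m, n = m + 1 := ⟨n - 1, by omega⟩
      exact hTUpos m (by omega) i⟩
  -- the Hilbert distance
  · rw [← tendsto_add_atTop_iff_nat 1]
    have hkey : ∀ n ≥ N,
        hilbertDist (T.mulVec (U (n + 1))) v
          = Real.log ((⨆ i, f n i / v i) / (⨅ i, f n i / v i)) := by
      intro n hn
      have hr := hrpos n
      have hx : ∀ i, T.mulVec (U (n + 1)) i / v i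
          = frobNorm (prodSeq A n) * (f n i / v i) := by
        intro i
        simp only [hfdef]
        rw [div_div, mul_div_assoc', mul_div_mul_left _ _ hr.ne']
      unfold hilbertDist
      have hsup : (⨆ i, T.mulVec (U (n + 1)) i / v i)
          = frobNorm (prodSeq A n) * ⨆ i, f n i / v i := by
        rw [Real.mul_iSup_of_nonneg hr.le]
        exact iSup_congr hx
      have hinf : (⨅ i, T.mulVec (U (n + 1)) i / v i)
          = frobNorm (prodSeq A n) * ⨅ i, f n i / v i := by
        rw [Real.mul_iInf_of_nonneg hr.le]
        exact iInf_congr hx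
      rw [hsup, hinf, mul_div_mul_left _ _ hr.ne']
    have hsuplim : Tendsto (fun n => ⨆ i, f n i / v i) atTop (nhds c) := by
      have : ∀ n, (⨆ i, f n i / v i)
          = Finset.univ.sup' Finset.univ_nonempty (fun i => f n i / v i) := fun n =>
        (Finset.sup'_univ_eq_ciSup _).symm
      simp only [this]
      have := Filter.Tendsto.finset_sup'_nhds_apply (f := fun i n => f n i / v i)
        (g := fun _ => c) (l := atTop) Finset.univ_nonempty
        (fun i _ => by
          have := (hflim i).div_const (v i)
          rwa [mul_div_assoc, div_self (hv i).ne', mul_one] at this)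
      simpa using this
    have hinflim : Tendsto (fun n => ⨅ i, f n i / v i) atTop (nhds c) := by
      have : ∀ n, (⨅ i, f n i / v i)
          = Finset.univ.inf' Finset.univ_nonempty (fun i => f n i / v i) := fun n =>
        (Finset.inf'_univ_eq_ciInf _).symm
      simp only [this]
      have := Filter.Tendsto.finset_inf'_nhds_apply (f := fun i n => f n i / v i)
        (g := fun _ => c) (l := atTop) Finset.univ_nonempty
        (fun i _ => by
          have := (hflim i).div_const (v i)
          rwa [mul_div_assoc, div_self (hv i).ne', mul_one] at this)
      simpa using this
    have hloglim : Tendsto (fun n => Real.log ((⨆ i, f n i / v i) / (⨅ i, f n i / v i)))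
        atTop (nhds 0) := by
      have hdiv : Tendsto (fun n => (⨆ i, f n i / v i) / (⨅ i, f n i / v i))
          atTop (nhds 1) := by
        have := hsuplim.div hinflim hU0.ne'
        rwa [div_self hU0.ne'] at this
      have := hdiv.log one_ne_zero
      simpa using this
    refine hloglim.congr' ?_
    filter_upwards [eventually_ge_atTop N] with n hn
    exact (hkey n hn).symm
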